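/- For every graph G, every s ∈ ℕ≥1 ∪ {∞}, and every k ∈ ℕ: G has no (k+1,s)-edge-hide-out if and only if G has a layout of s-edge-degeneracy at most k (i.e., δ_e^s(G) ≤ k). -/

import Mathlib

/-- A walk in a multigraph given by its endpoint function `ends`:
`IsWalk ends u w l` means `l` is the list of edges of a walk from `u` to `w`. -/
inductive IsWalk {V E : Type*} (ends : E → Sym2 V) : V → V → List E → Prop
  | nil (v : V) : IsWalk ends v v []
  | cons {u v w : V} {e : E} {l : List E} :
      ends e = s(u, v) → IsWalk ends v w l → IsWalk ends u w (e :: l)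

/-- `EdgeSep ends s x S A` : the edge set `A` meets every walk of length at most `s`
from `x` to a vertex of `S`. -/
def EdgeSep {V E : Type*} (ends : E → Sym2 V) (s : ℕ∞) (x : V) (S : Set V) (A : Set E) : Prop :=
  ∀ y ∈ S, ∀ l : List E, IsWalk ends x y l → (l.length : ℕ∞) ≤ s → ∃ e ∈ l, e ∈ A

/-- A `(k,s)`-edge-hide-out: every edge set separating a vertex `x ∈ R` from `R \ {x}`
(at distance `s`) has at least `k` edges. -/
def IsHideout {V E : Type*} (ends : E → Sym2 V) (s : ℕ∞) (k : ℕ) (R : Set V) : Prop :=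
  ∀ x ∈ R, ∀ A : Set E, EdgeSep ends s x (R \ {x}) A → k ≤ A.ncard

/-- `G` admits a layout of `s`-edge-degeneracy at most `k`. -/
def LayoutWidthLE {V E : Type*} (ends : E → Sym2 V) (s : ℕ∞) (k : ℕ) : Prop :=
  ∃ (n : ℕ) (L : Fin n ≃ V), ∀ i : Fin n,
    ∃ A : Set E, A.ncard ≤ k ∧ EdgeSep ends s (L i) {v | ∃ j, j < i ∧ L j = v} A

/-- The `s`-edge-degeneracy `δ_e^s(G)`. -/
noncomputable def edgeDeg {V E : Type*} (ends : E → Sym2 V) (s : ℕ∞) : ℕ :=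
  sInf {k | LayoutWidthLE ends s k}

/-- The edge-degree of a vertex (parallel edges counted with multiplicity). -/
noncomputable def degE {V E : Type*} (ends : E → Sym2 V) (v : V) : ℕ :=
  {e : E | v ∈ ends e}.ncard

lemma edgeSep_mono {V E : Type*} (ends : E → Sym2 V) (s : ℕ∞) (x : V) {S S' : Set V}
    (h : S' ⊆ S) {A : Set E} (hA : EdgeSep ends s x S A) : EdgeSep ends s x S' A :=
  fun y hy => hA y (h hy)

lemma range_snoc_aux {α : Type*} {m : ℕ} (f : Fin m → α) (x : α) :
    Set.range (Fin.snoc f x : Fin (m + 1) → α) = Set.range f ∪ {x} := by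
  ext v
  constructor
  · rintro ⟨i, rfl⟩
    induction i using Fin.lastCases with
    | last => right; simp
    | cast j => left; exact ⟨j, by simp⟩
  · rintro (⟨j, rfl⟩ | h)
    · exact ⟨j.castSucc, by simp⟩
    · exact ⟨Fin.last m, by simp [Set.mem_singleton_iff.mp h]⟩

lemma exists_layout_aux {V E : Type*} [Finite V] [Finite E] (ends : E → Sym2 V) (s : ℕ∞) (k : ℕ)
    (h : ∀ R : Set V, R.Nonempty → ¬ IsHideout ends s (k + 1) R) :
    ∀ (n : ℕ) (R : Set V), R.ncard = n →
      ∃ f : Fin n → V, Function.Injective f ∧ Set.range f = R ∧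
        ∀ i, ∃ A : Set E, A.ncard ≤ k ∧
          EdgeSep ends s (f i) {v | ∃ j, j < i ∧ f j = v} A := by
  intro n
  induction n with
  | zero =>
    intro R hR
    refine ⟨Fin.elim0, fun i => i.elim0, ?_, fun i => i.elim0⟩
    rw [Set.range_eq_empty]
    exact ((Set.ncard_eq_zero (Set.toFinite R)).mp hR).symm
  | succ m ih =>
    intro R hR
    have hne : R.Nonempty := Set.nonempty_of_ncard_ne_zero (by omega)
    have hno := h R hne
    rw [IsHideout] at hno
    push_neg at hno
    obtain ⟨x, hxR, A, hAsep, hAcard⟩ := hno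
    have hAk : A.ncard ≤ k := by omega
    have hcard : (R \ {x}).ncard = m := by
      rw [Set.ncard_diff_singleton_of_mem hxR]; omega
    obtain ⟨f, hfinj, hfrange, hfsep⟩ := ih (R \ {x}) hcard
    have hxnr : x ∉ Set.range f := by rw [hfrange]; simp
    refine ⟨Fin.snoc f x, ?_, ?_, ?_⟩
    · intro a b hab
      induction a using Fin.lastCases with
      | last =>
        induction b using Fin.lastCases with
        | last => rfl
        | cast j =>
          exact absurd ⟨j, by simpa using hab.symm⟩ hxnr
      | cast i =>
        induction b using Fin.lastCases with
        | last => exact absurd ⟨i, by simpa using hab⟩ hxnr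
        | cast j =>
          have : f i = f j := by simpa using hab
          rw [hfinj this]
    · rw [range_snoc_aux, hfrange, Set.diff_union_self,
        Set.union_eq_self_of_subset_right (Set.singleton_subset_iff.mpr hxR)]
    · intro i
      induction i using Fin.lastCases with
      | last =>
        refine ⟨A, hAk, ?_⟩
        have hset : {v | ∃ j, j < Fin.last m ∧ (Fin.snoc f x : Fin (m+1) → V) j = v}
            = R \ {x} := by
          ext v
          constructor
          · rintro ⟨j, hj, rfl⟩
            have hj' : j ≠ Fin.last m := ne_of_lt hj
            rw [← Fin.castSucc_castPred j hj', Fin.snoc_castSucc, ← hfrange]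
            exact ⟨_, rfl⟩
          · intro hv
            rw [← hfrange] at hv
            obtain ⟨j, rfl⟩ := hv
            exact ⟨j.castSucc, Fin.castSucc_lt_last j, by simp⟩
        rw [hset, Fin.snoc_last]
        exact hAsep
      | cast i' =>
        obtain ⟨A', hA'k, hA'sep⟩ := hfsep i'
        refine ⟨A', hA'k, ?_⟩
        have hset : {v | ∃ j, j < i'.castSucc ∧ (Fin.snoc f x : Fin (m+1) → V) j = v}
            = {v | ∃ j, j < i' ∧ f j = v} := by
          ext v
          constructor
          · rintro ⟨j, hj, rfl⟩
            have hj' : j ≠ Fin.last m :=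
              ne_of_lt (lt_of_lt_of_le hj (Fin.castSucc_lt_last i').le)
            obtain ⟨j'', rfl⟩ : ∃ j'', j = Fin.castSucc j'' :=
              ⟨j.castPred hj', (Fin.castSucc_castPred j hj').symm⟩
            exact ⟨j'', Fin.castSucc_lt_castSucc_iff.mp hj, by simp⟩
          · rintro ⟨j, hj, rfl⟩
            exact ⟨j.castSucc, Fin.castSucc_lt_castSucc_iff.mpr hj, by simp⟩
        rw [hset, Fin.snoc_castSucc]
        exact hA'sep

/-- min-max theorem: `G` has no (nonempty) `(k+1,s)`-edge-hide-out iff `G` has a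
layout of `s`-edge-degeneracy at most `k`, i.e. `δ_e^s(G) ≤ k`. -/
theorem no_hideout_iff_layout {V E : Type*} [Finite V] [Finite E]
    (ends : E → Sym2 V) (hloopless : ∀ e, ¬ (ends e).IsDiag)
    (s : ℕ∞) (hs : 1 ≤ s) (k : ℕ) :
    (∀ R : Set V, R.Nonempty → ¬ IsHideout ends s (k + 1) R) ↔ LayoutWidthLE ends s k := by
  constructor
  · intro h
    obtain ⟨f, hfinj, hfrange, hfsep⟩ :=
      exists_layout_aux ends s k h (Set.univ : Set V).ncard Set.univ rfl
    have hfsurj : Function.Surjective f := by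
      rw [← Set.range_eq_univ] at *
      exact hfrange
    refine ⟨_, Equiv.ofBijective f ⟨hfinj, hfsurj⟩, ?_⟩
    intro i
    exact hfsep i
  · rintro ⟨n, L, hL⟩ R hR hRhide
    classical
    obtain ⟨x0, hx0⟩ := hR
    set T : Finset (Fin n) := Finset.univ.filter (fun i => L i ∈ R) with hT
    have hTne : T.Nonempty := ⟨L.symm x0, by simp [hT, hx0]⟩
    set i := T.max' hTne with hi
    have hiR : L i ∈ R := by
      have := T.max'_mem hTne
      simpa [hT] using this
    obtain ⟨A, hAk, hAsep⟩ := hL i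
    have hsep : EdgeSep ends s (L i) (R \ {L i}) A := by
      refine edgeSep_mono ends s _ ?_ hAsep
      rintro v ⟨hvR, hvx⟩
      refine ⟨L.symm v, ?_, by simp⟩
      have hle : L.symm v ≤ i := T.le_max' _ (by simp [hT, hvR])
      rcases lt_or_eq_of_le hle with hlt | heq
      · exact hlt
      · exfalso
        apply hvx
        have : L (L.symm v) = L i := by rw [heq]
        simpa using this
    have := hRhide (L i) hiR A hsep
    omega
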